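/- Let 0 ≤ k ≤ n and let N = [n choose k]₂. Then ‖ (1/N) ∑_{W ∈ Gr₂(n,k)} |W⟩⟨W| ‖ = (1/N) ∑_{m=0}^{k} 2^{m²} [n−k choose m]₂ [k choose m]₂ · 2^{−m}, where ‖·‖ is the operator norm on (ℂ²)^{⊗n}; moreover the vector ∑_{W ∈ Gr₂(n,k)} |W⟩ is an eigenvector of ∑_{W} |W⟩⟨W| attaining this norm. -/

import Mathlib

set_option synthInstance.maxHeartbeats 1000000
set_option maxHeartbeats 1600000
set_option synthInstance.maxHeartbeats 1000000
set_option maxHeartbeats 1600000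


open scoped Classical

/-- The subspace state `|W⟩ = 2^{-k/2} ∑_{u ∈ W} |u⟩` in `(ℂ²)^{⊗n}`, identified with
`EuclideanSpace ℂ (Fin n → ZMod 2)` via the computational basis `{|v⟩ : v ∈ 𝔽₂ⁿ}`. -/
noncomputable def subspaceState {n : ℕ} (W : Submodule (ZMod 2) (Fin n → ZMod 2)) :
    EuclideanSpace ℂ (Fin n → ZMod 2) :=
  (((Real.sqrt 2 : ℝ) : ℂ) ^ (Module.finrank (ZMod 2) W))⁻¹ •
    ∑ u : W, EuclideanSpace.single (u : Fin n → ZMod 2) (1 : ℂ)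

/-- The rank-one operator `|ψ⟩⟨φ|`. -/
noncomputable def outer {ι : Type*} [Fintype ι] [DecidableEq ι]
    (ψ φ : EuclideanSpace ℂ ι) : EuclideanSpace ℂ ι →L[ℂ] EuclideanSpace ℂ ι :=
  (innerSL ℂ φ).smulRight ψ

/-- The Grassmannian `Gr₂(n,k)`: the set of `k`-dimensional subspaces of `𝔽₂ⁿ`. -/
abbrev Grassmannian (n k : ℕ) :=
  {W : Submodule (ZMod 2) (Fin n → ZMod 2) // Module.finrank (ZMod 2) W = k}

noncomputable instance {n k : ℕ} : Fintype (Grassmannian n k) := Fintype.ofFinite _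

/-- The Gaussian binomial coefficient `[n choose k]₂`, as a real number, with the convention
that it vanishes when `k > n`; `[n choose k]₂ = |Gr₂(n,k)|`. -/
noncomputable def gbinomR (n k : ℕ) : ℝ :=
  (∏ i ∈ Finset.range k, ((2 : ℝ) ^ (n - i) - 1)) /
    (∏ i ∈ Finset.range k, ((2 : ℝ) ^ (k - i) - 1))

lemma gbAux_one_le_pow (e : ℕ) : (1:ℝ) ≤ 2 ^ e := one_le_pow₀ (by norm_num)

lemma gbAux_denom_pos (k : ℕ) : 0 < ∏ i ∈ Finset.range k, ((2 : ℝ) ^ (k - i) - 1) := by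
  apply Finset.prod_pos
  intro i hi
  rw [Finset.mem_range] at hi
  have h1 : 1 < (2:ℝ) ^ (k - i) := one_lt_pow₀ (by norm_num) (by omega)
  linarith

lemma gbAux_numer_nonneg (n k : ℕ) :
    0 ≤ ∏ i ∈ Finset.range k, ((2 : ℝ) ^ (n - i) - 1) := by
  apply Finset.prod_nonneg
  intro i _
  have := gbAux_one_le_pow (n - i)
  linarith

lemma gb_nonneg (n k : ℕ) : 0 ≤ gbinomR n k :=
  div_nonneg (gbAux_numer_nonneg n k) (gbAux_denom_pos k).le

lemma gb_pos {n k : ℕ} (h : k ≤ n) : 0 < gbinomR n k := by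
  apply div_pos _ (gbAux_denom_pos k)
  apply Finset.prod_pos
  intro i hi
  rw [Finset.mem_range] at hi
  have h1 : 1 < (2:ℝ) ^ (n - i) := one_lt_pow₀ (by norm_num) (by omega)
  linarith

lemma gb_zero (n : ℕ) : gbinomR n 0 = 1 := by simp [gbinomR]

lemma gb_diag (k : ℕ) : gbinomR k k = 1 :=
  div_self (gbAux_denom_pos k).ne'

lemma gb_of_lt {n k : ℕ} (h : n < k) : gbinomR n k = 0 := by
  unfold gbinomR
  rw [Finset.prod_eq_zero (Finset.mem_range.2 h) (by simp), zero_div]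

lemma gb_succ (n k : ℕ) :
    gbinomR (n+1) (k+1) = (2^(n+1) - 1) / (2^(k+1) - 1) * gbinomR n k := by
  have hnum : ∏ i ∈ Finset.range (k+1), ((2:ℝ)^(n+1-i) - 1)
      = (∏ i ∈ Finset.range k, ((2:ℝ)^(n-i) - 1)) * ((2:ℝ)^(n+1) - 1) := by
    rw [Finset.prod_range_succ']
    simp [Nat.succ_sub_succ]
  have hden : ∏ i ∈ Finset.range (k+1), ((2:ℝ)^(k+1-i) - 1)
      = (∏ i ∈ Finset.range k, ((2:ℝ)^(k-i) - 1)) * ((2:ℝ)^(k+1) - 1) := by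
    rw [Finset.prod_range_succ']
    simp [Nat.succ_sub_succ]
  have hd1 : (∏ i ∈ Finset.range k, ((2:ℝ)^(k-i) - 1)) ≠ 0 := (gbAux_denom_pos k).ne'
  have hd2 : ((2:ℝ)^(k+1) - 1) ≠ 0 := by
    have : (1:ℝ) < 2^(k+1) := one_lt_pow₀ (by norm_num) (by omega)
    linarith
  unfold gbinomR
  rw [hnum, hden]
  field_simp

lemma gb_step (n k : ℕ) :
    gbinomR n (k+1) = (2^(n-k) - 1) / (2^(k+1) - 1) * gbinomR n k := by
  have hnum : ∏ i ∈ Finset.range (k+1), ((2:ℝ)^(n-i) - 1)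
      = (∏ i ∈ Finset.range k, ((2:ℝ)^(n-i) - 1)) * ((2:ℝ)^(n-k) - 1) := by
    rw [Finset.prod_range_succ]
  have hden : ∏ i ∈ Finset.range (k+1), ((2:ℝ)^(k+1-i) - 1)
      = (∏ i ∈ Finset.range k, ((2:ℝ)^(k-i) - 1)) * ((2:ℝ)^(k+1) - 1) := by
    rw [Finset.prod_range_succ']
    simp [Nat.succ_sub_succ]
  have hd1 : (∏ i ∈ Finset.range k, ((2:ℝ)^(k-i) - 1)) ≠ 0 := (gbAux_denom_pos k).ne'
  have hd2 : ((2:ℝ)^(k+1) - 1) ≠ 0 := by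
    have : (1:ℝ) < 2^(k+1) := one_lt_pow₀ (by norm_num) (by omega)
    linarith
  unfold gbinomR
  rw [hnum, hden]
  field_simp

lemma gb_pascal1 (n k : ℕ) :
    gbinomR (n+1) (k+1) = gbinomR n (k+1) + 2^(n-k) * gbinomR n k := by
  by_cases h : k ≤ n
  · rw [gb_succ, gb_step]
    have h2 : (2:ℝ)^(n-k) * 2^(k+1) = 2^(n+1) := by
      rw [← pow_add]; congr 1; omega
    have hd2 : ((2:ℝ)^(k+1) - 1) ≠ 0 := by
      have : (1:ℝ) < 2^(k+1) := one_lt_pow₀ (by norm_num) (by omega)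
      linarith
    field_simp
    linear_combination (-(gbinomR n k)) * h2
  · push_neg at h
    rw [gb_of_lt (by omega : n + 1 < k + 1), gb_of_lt (by omega : n < k + 1),
      gb_of_lt h]
    ring

lemma gb_pascal2 (n k : ℕ) :
    gbinomR (n+1) (k+1) = 2^(k+1) * gbinomR n (k+1) + gbinomR n k := by
  by_cases h : k ≤ n
  · rw [gb_succ, gb_step]
    have h2 : (2:ℝ)^(k+1) * 2^(n-k) = 2^(n+1) := by
      rw [← pow_add]; congr 1; omega
    have hd2 : ((2:ℝ)^(k+1) - 1) ≠ 0 := by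
      have : (1:ℝ) < 2^(k+1) := one_lt_pow₀ (by norm_num) (by omega)
      linarith
    field_simp
    linear_combination (-(gbinomR n k)) * h2
  · push_neg at h
    rw [gb_of_lt (by omega : n + 1 < k + 1), gb_of_lt (by omega : n < k + 1),
      gb_of_lt h]
    ring

noncomputable def vsumAux (a k : ℕ) : ℝ :=
  ∑ m ∈ Finset.range (k+1), 2^(m^2) * gbinomR a m * gbinomR k m

noncomputable def gsumAux (a j : ℕ) : ℝ :=
  ∑ m ∈ Finset.range (j+1), 2^(m^2+m) * gbinomR a (m+1) * gbinomR j m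

lemma vsum_zero (a : ℕ) : vsumAux a 0 = 1 := by
  simp [vsumAux, gb_zero]


lemma gsum_closed_of_vsum (j : ℕ) (hv : ∀ a, vsumAux a j = gbinomR (a+j) j) :
    ∀ a, gsumAux a j = gbinomR (a+j) (j+1) := by
  intro a
  induction a with
  | zero =>
    have h1 : gsumAux 0 j = 0 := by
      apply Finset.sum_eq_zero
      intro m _
      rw [gb_of_lt (Nat.succ_pos m)]
      ring
    rw [h1, zero_add, gb_of_lt (by omega)]
  | succ a ih =>
    have hsplit : gsumAux (a+1) j = gsumAux a j + 2^a * vsumAux a j := by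
      unfold gsumAux vsumAux
      rw [Finset.mul_sum, ← Finset.sum_add_distrib]
      apply Finset.sum_congr rfl
      intro m _
      rw [gb_pascal1 a m]
      by_cases hma : m ≤ a
      · have he : (2:ℝ)^(m^2+m) * 2^(a-m) = 2^a * 2^(m^2) := by
          rw [← pow_add, ← pow_add]; congr 1; omega
        linear_combination (gbinomR a m * gbinomR j m) * he
      · push_neg at hma
        rw [gb_of_lt hma]
        ring
    rw [hsplit, ih, hv a]
    have := gb_pascal1 (a+j) j
    rw [show a + j - j = a by omega] at this
    rw [show a + 1 + j = a + j + 1 by omega, this]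

lemma vsum_closed : ∀ j a, vsumAux a j = gbinomR (a+j) j := by
  intro j
  induction j with
  | zero => intro a; rw [vsum_zero, Nat.add_zero, gb_zero]
  | succ j ihv =>
    have hg := gsum_closed_of_vsum j ihv
    intro a
    have key : vsumAux a (j+1) = vsumAux a j + 2^(j+1) * gsumAux a j := by
      have e1 : vsumAux a (j+1)
          = (∑ m ∈ Finset.range (j+1),
              2^((m+1)^2) * gbinomR a (m+1) * gbinomR (j+1) (m+1))
            + 2^(0^2) * gbinomR a 0 * gbinomR (j+1) 0 := by
        unfold vsumAux
        rw [Finset.sum_range_succ']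
      have e2 : vsumAux a j = (∑ m ∈ Finset.range (j+1),
            2^((m+1)^2) * gbinomR a (m+1) * gbinomR j (m+1))
            + 2^(0^2) * gbinomR a 0 * gbinomR j 0 := by
        have : vsumAux a j
            = ∑ m ∈ Finset.range (j+2), 2^(m^2) * gbinomR a m * gbinomR j m := by
          unfold vsumAux
          rw [Finset.sum_range_succ (n := j+1), gb_of_lt (by omega : j < j+1)]
          ring
        rw [this, Finset.sum_range_succ']
      have hterm : ∀ m ∈ Finset.range (j+1),
          2^((m+1)^2) * gbinomR a (m+1) * gbinomR (j+1) (m+1)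
          = 2^((m+1)^2) * gbinomR a (m+1) * gbinomR j (m+1)
            + 2^(j+1) * (2^(m^2+m) * gbinomR a (m+1) * gbinomR j m) := by
        intro m hm
        rw [Finset.mem_range] at hm
        rw [gb_pascal1 j m]
        have he : (2:ℝ)^(j+1) * 2^(m^2+m) = 2^((m+1)^2) * 2^(j-m) := by
          rw [← pow_add, ← pow_add]; congr 1; ring_nf; omega
        linear_combination (-(gbinomR a (m+1) * gbinomR j m)) * he
      rw [e1, Finset.sum_congr rfl hterm, Finset.sum_add_distrib, ← Finset.mul_sum]
      have e3 : (∑ m ∈ Finset.range (j+1),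
          2^(m^2+m) * gbinomR a (m+1) * gbinomR j m) = gsumAux a j := rfl
      rw [e3, e2]
      simp only [gb_zero]
      ring
    rw [key, ihv a, hg a]
    have := gb_pascal2 (a+j) j
    rw [show a + (j+1) = a + j + 1 by omega, this]
    ring

lemma gsum_closed (j a : ℕ) : gsumAux a j = gbinomR (a+j) (j+1) :=
  gsum_closed_of_vsum j (fun a => vsum_closed j a) a

noncomputable def fsumAux (a k : ℕ) : ℝ :=
  ∑ m ∈ Finset.range (k+1),
    2^(m^2) * gbinomR a m * gbinomR k m * (2:ℝ)^(-(m:ℤ))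

lemma fsum_zero (a : ℕ) : fsumAux a 0 = 1 := by
  simp [fsumAux, gb_zero]

lemma fsum_succ (a k : ℕ) :
    fsumAux a (k+1) = gbinomR (a+k) k + gbinomR (a+k) (k+1) := by
  have e1 : fsumAux a (k+1)
      = (∑ m ∈ Finset.range (k+1),
          2^((m+1)^2) * gbinomR a (m+1) * gbinomR (k+1) (m+1) * (2:ℝ)^(-(↑(m+1) : ℤ)))
        + 2^(0^2) * gbinomR a 0 * gbinomR (k+1) 0 * (2:ℝ)^(-(↑(0:ℕ) : ℤ)) := by
    unfold fsumAux
    rw [Finset.sum_range_succ']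
  have hterm : ∀ m ∈ Finset.range (k+1),
      2^((m+1)^2) * gbinomR a (m+1) * gbinomR (k+1) (m+1) * (2:ℝ)^(-(↑(m+1) : ℤ))
      = 2^((m+1)^2) * gbinomR a (m+1) * gbinomR k (m+1)
        + 2^(m^2+m) * gbinomR a (m+1) * gbinomR k m := by
    intro m hm
    rw [gb_pascal2 k m, zpow_neg, zpow_natCast]
    have hne : ((2:ℝ)^(m+1)) ≠ 0 := by positivity
    have he : (2:ℝ)^((m+1)^2) = 2^(m^2+m) * 2^(m+1) := by
      rw [← pow_add]; congr 1; ring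
    field_simp
    linear_combination (gbinomR a (m+1) * gbinomR k m) * he
  have e2 : vsumAux a k = (∑ m ∈ Finset.range (k+1),
      2^((m+1)^2) * gbinomR a (m+1) * gbinomR k (m+1))
      + 2^(0^2) * gbinomR a 0 * gbinomR k 0 := by
    have h3 : vsumAux a k
        = ∑ m ∈ Finset.range (k+2), 2^(m^2) * gbinomR a m * gbinomR k m := by
      unfold vsumAux
      rw [Finset.sum_range_succ (n := k+1), gb_of_lt (by omega : k < k+1)]
      ring
    rw [h3, Finset.sum_range_succ']
  have e3 : (∑ m ∈ Finset.range (k+1),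
      2^(m^2+m) * gbinomR a (m+1) * gbinomR k m) = gsumAux a k := rfl
  rw [e1, Finset.sum_congr rfl hterm, Finset.sum_add_distrib, e3, gsum_closed,
    ← vsum_closed k a, e2, gb_zero, gb_zero, gb_zero]
  ring

noncomputable def grCard (n k : ℕ) : ℕ := Nat.card (Grassmannian n k)

lemma grCard_zero (n : ℕ) : grCard n 0 = 1 := by
  rw [grCard, Nat.card_eq_one_iff_unique]
  constructor
  · constructor
    intro W W'
    apply Subtype.ext
    rw [Submodule.finrank_eq_zero.mp W.2, Submodule.finrank_eq_zero.mp W'.2]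
  · exact ⟨⟨⊥, finrank_bot _ _⟩⟩

section Quot

variable {n : ℕ} {v : Fin n → ZMod 2}

/-- rank of image in quotient -/
lemma finrank_map_mkQ_add_one (p : Submodule (ZMod 2) (Fin n → ZMod 2))
    (hp : Module.finrank (ZMod 2) p = 1)
    (W : Submodule (ZMod 2) (Fin n → ZMod 2)) (hle : p ≤ W) :
    Module.finrank (ZMod 2) (W.map p.mkQ) + 1 = Module.finrank (ZMod 2) W := by
  set f := p.mkQ.comp W.subtype with hf
  have hrange : LinearMap.range f = W.map p.mkQ := by
    rw [hf, LinearMap.range_comp, Submodule.range_subtype]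
  have hker : LinearMap.ker f = p.comap W.subtype := by
    rw [hf, LinearMap.ker_comp, Submodule.ker_mkQ]
  have h1 : Module.finrank (ZMod 2) (LinearMap.ker f) = 1 := by
    rw [hker, (Submodule.comapSubtypeEquivOfLe hle).finrank_eq, hp]
  have := LinearMap.finrank_range_add_finrank_ker f
  rw [hrange, h1] at this
  omega

/-- The subspaces of dimension `k+1` containing a nonzero `v` biject with
`k`-dimensional subspaces of the quotient. -/
noncomputable def quotEquiv (hv : v ≠ 0) (k : ℕ) :
    {W : Grassmannian n (k+1) // v ∈ W.1} ≃
      {U : Submodule (ZMod 2) ((Fin n → ZMod 2) ⧸ (Submodule.span (ZMod 2) {v})) //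
        Module.finrank (ZMod 2) U = k} := by
  set p := Submodule.span (ZMod 2) {v} with hpdef
  have hp : Module.finrank (ZMod 2) p = 1 := finrank_span_singleton hv
  refine
  { toFun := fun W => ⟨W.1.1.map p.mkQ, ?_⟩
    invFun := fun U => ⟨⟨U.1.comap p.mkQ, ?_⟩, ?_⟩
    left_inv := ?_
    right_inv := ?_ }
  · have hle : p ≤ W.1.1 := by
      rw [hpdef, Submodule.span_singleton_le_iff_mem]; exact W.2
    have := finrank_map_mkQ_add_one p hp W.1.1 hle
    rw [W.1.2] at this
    omega
  · have hle : p ≤ U.1.comap p.mkQ := by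
      intro x hx
      simp only [Submodule.mem_comap]
      have : p.mkQ x = 0 := by
        rw [Submodule.mkQ_apply, Submodule.Quotient.mk_eq_zero]; exact hx
      rw [this]; exact U.1.zero_mem
    have hmap : (U.1.comap p.mkQ).map p.mkQ = U.1 :=
      Submodule.map_comap_eq_of_surjective p.mkQ_surjective U.1
    have := finrank_map_mkQ_add_one p hp (U.1.comap p.mkQ) hle
    rw [hmap, U.2] at this
    omega
  · show v ∈ U.1.comap p.mkQ
    have : p.mkQ v = 0 := by
      rw [Submodule.mkQ_apply, Submodule.Quotient.mk_eq_zero]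
      exact Submodule.mem_span_singleton_self v
    simp only [Submodule.mem_comap, this]
    exact U.1.zero_mem
  · intro W
    apply Subtype.ext; apply Subtype.ext
    show (W.1.1.map p.mkQ).comap p.mkQ = W.1.1
    rw [Submodule.comap_map_mkQ]
    have hle : p ≤ W.1.1 := by
      rw [hpdef, Submodule.span_singleton_le_iff_mem]; exact W.2
    exact sup_eq_right.mpr hle
  · intro U
    apply Subtype.ext
    exact Submodule.map_comap_eq_of_surjective p.mkQ_surjective U.1

end Quot

/-- transport subspaces along a linear equivalence -/
noncomputable def subEquivOfLinearEquiv {M N : Type*} [AddCommGroup M] [AddCommGroup N]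
    [Module (ZMod 2) M] [Module (ZMod 2) N] (g : M ≃ₗ[ZMod 2] N) (k : ℕ) :
    {U : Submodule (ZMod 2) M // Module.finrank (ZMod 2) U = k} ≃
      {U : Submodule (ZMod 2) N // Module.finrank (ZMod 2) U = k} where
  toFun U := ⟨U.1.map (g : M →ₗ[ZMod 2] N), by
    rw [LinearEquiv.finrank_map_eq]; exact U.2⟩
  invFun U := ⟨U.1.map (g.symm : N →ₗ[ZMod 2] M), by
    rw [LinearEquiv.finrank_map_eq]; exact U.2⟩
  left_inv U := by
    apply Subtype.ext
    show (U.1.map (g : M →ₗ[ZMod 2] N)).map (g.symm : N →ₗ[ZMod 2] M) = U.1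
    rw [← Submodule.map_comp]
    simp
  right_inv U := by
    apply Subtype.ext
    show (U.1.map (g.symm : N →ₗ[ZMod 2] M)).map (g : M →ₗ[ZMod 2] N) = U.1
    rw [← Submodule.map_comp]
    simp


lemma subCard {n k : ℕ} {v : Fin n → ZMod 2} (hv : v ≠ 0) :
    Nat.card {W : Grassmannian n (k+1) // v ∈ W.1} = grCard (n-1) k := by
  have hfrV : Module.finrank (ZMod 2) (Fin n → ZMod 2) = n := Module.finrank_fin_fun _
  have hfr : Module.finrank (ZMod 2)
      ((Fin n → ZMod 2) ⧸ (Submodule.span (ZMod 2) {v})) = n - 1 := by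
    have h1 := Submodule.finrank_quotient_add_finrank (Submodule.span (ZMod 2) {v})
    rw [finrank_span_singleton hv, hfrV] at h1
    omega
  have hfr2 : Module.finrank (ZMod 2) (Fin (n-1) → ZMod 2) = n - 1 :=
    Module.finrank_fin_fun _
  obtain ⟨g⟩ := FiniteDimensional.nonempty_linearEquiv_of_finrank_eq (hfr.trans hfr2.symm)
  exact Nat.card_congr ((quotEquiv hv k).trans (subEquivOfLinearEquiv g k))

lemma subCard0 {n : ℕ} {v : Fin n → ZMod 2} (hv : v ≠ 0) :
    Nat.card {W : Grassmannian n 0 // v ∈ W.1} = 0 := by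
  have : IsEmpty {W : Grassmannian n 0 // v ∈ W.1} := by
    constructor
    rintro ⟨W, hvW⟩
    have hbot : W.1 = ⊥ := Submodule.finrank_eq_zero.mp W.2
    rw [hbot] at hvW
    exact hv (Submodule.mem_bot _ |>.mp hvW)
  exact Nat.card_of_isEmpty

/-- value of `#{W : v ∈ W}` for `v ≠ 0`, with junk value 0 at `k = 0`. -/
noncomputable def hvalAux (n k : ℕ) : ℕ := if k = 0 then 0 else grCard (n-1) (k-1)

lemma subCard' {n k : ℕ} {v : Fin n → ZMod 2} (hv : v ≠ 0) :
    Nat.card {W : Grassmannian n k // v ∈ W.1} = hvalAux n k := by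
  cases k with
  | zero => rw [subCard0 hv]; rfl
  | succ k => rw [subCard hv]; rfl

lemma subCard_zero_vec (n k : ℕ) :
    Nat.card {W : Grassmannian n k // (0 : Fin n → ZMod 2) ∈ W.1} = grCard n k :=
  Nat.card_congr (Equiv.subtypeUnivEquiv (fun W => W.1.zero_mem))

lemma sum_ite_mem_gr (n k : ℕ) (v : Fin n → ZMod 2) :
    (∑ W : Grassmannian n k, if v ∈ W.1 then (1:ℝ) else 0)
      = (Nat.card {W : Grassmannian n k // v ∈ W.1} : ℝ) := by
  rw [Finset.sum_boole, Nat.card_eq_fintype_card, Fintype.card_subtype]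

lemma card_submodule_sum (n : ℕ) (W : Submodule (ZMod 2) (Fin n → ZMod 2)) :
    (∑ v : Fin n → ZMod 2, if v ∈ W then (1:ℝ) else 0) = (Nat.card W : ℝ) := by
  rw [Finset.sum_boole, Nat.card_eq_fintype_card, Fintype.card_subtype]

lemma card_submodule {n k : ℕ} (W : Submodule (ZMod 2) (Fin n → ZMod 2))
    (hW : Module.finrank (ZMod 2) W = k) : Nat.card W = 2^k := by
  have h := Module.card_eq_pow_finrank (K := ZMod 2) (V := W)
  rw [Nat.card_eq_fintype_card, h, hW, ZMod.card]

lemma card_V (n : ℕ) : Fintype.card (Fin n → ZMod 2) = 2^n := by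
  rw [Fintype.card_fun, ZMod.card, Fintype.card_fin]

lemma gr_double (n k : ℕ) :
    (grCard n (k+1) : ℝ) * (2^(k+1) - 1) = (2^n - 1) * (grCard (n-1) k : ℝ) := by
  have key : (∑ W : Grassmannian n (k+1), ∑ v : Fin n → ZMod 2,
      if v ∈ W.1 ∧ v ≠ 0 then (1:ℝ) else 0)
      = (grCard n (k+1) : ℝ) * (2^(k+1) - 1) := by
    have hW : ∀ W : Grassmannian n (k+1),
        (∑ v : Fin n → ZMod 2, if v ∈ W.1 ∧ v ≠ 0 then (1:ℝ) else 0)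
          = (2:ℝ)^(k+1) - 1 := by
      intro W
      rw [Finset.sum_boole]
      have hfe : Finset.univ.filter (fun v : Fin n → ZMod 2 => v ∈ W.1 ∧ v ≠ 0)
          = (Finset.univ.filter (fun v => v ∈ W.1)).erase 0 := by
        ext x
        simp [Finset.mem_erase, and_comm]
      rw [hfe, Finset.card_erase_of_mem (by simp [W.1.zero_mem])]
      have hcard : (Finset.univ.filter (fun v => v ∈ W.1)).card = 2^(k+1) := by
        rw [← Fintype.card_subtype, ← Nat.card_eq_fintype_card, card_submodule W.1 W.2]
      rw [hcard]
      push_cast [Nat.one_le_two_pow]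
      ring
    rw [Finset.sum_congr rfl (fun W _ => hW W), Finset.sum_const, Finset.card_univ,
      ← Nat.card_eq_fintype_card]
    rw [nsmul_eq_mul]
    rfl
  rw [← key, Finset.sum_comm]
  have hv : ∀ v : Fin n → ZMod 2,
      (∑ W : Grassmannian n (k+1), if v ∈ W.1 ∧ v ≠ 0 then (1:ℝ) else 0)
        = if v ≠ 0 then (grCard (n-1) k : ℝ) else 0 := by
    intro v
    by_cases h0 : v = 0
    · simp [h0]
    · rw [if_pos h0]
      have : ∀ W : Grassmannian n (k+1),
          (if v ∈ W.1 ∧ v ≠ 0 then (1:ℝ) else 0) = if v ∈ W.1 then 1 else 0 := by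
        intro W
        by_cases hm : v ∈ W.1 <;> simp [hm, h0]
      rw [Finset.sum_congr rfl (fun W _ => this W), sum_ite_mem_gr, subCard h0]
  rw [Finset.sum_congr rfl (fun v _ => hv v)]
  rw [Finset.sum_ite, Finset.sum_const_zero, Finset.sum_const, add_zero]
  have hcard : (Finset.univ.filter (fun v : Fin n → ZMod 2 => v ≠ 0)).card = 2^n - 1 := by
    rw [Finset.filter_ne', Finset.card_erase_of_mem (Finset.mem_univ 0),
      Finset.card_univ, card_V]
  rw [hcard, nsmul_eq_mul]
  push_cast [Nat.one_le_two_pow]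
  ring

lemma inter_card_sum (n k : ℕ) (W0 : Submodule (ZMod 2) (Fin n → ZMod 2))
    (hW0 : Module.finrank (ZMod 2) W0 = k) :
    (∑ W : Grassmannian n k, (Nat.card ↥(W0 ⊓ W.1) : ℝ))
      = (grCard n k : ℝ) + ((2:ℝ)^k - 1) * (hvalAux n k : ℝ) := by
  have h1 : ∀ W : Grassmannian n k, (Nat.card ↥(W0 ⊓ W.1) : ℝ)
      = ∑ v : Fin n → ZMod 2, if v ∈ W0 ∧ v ∈ W.1 then (1:ℝ) else 0 := by
    intro W
    rw [← card_submodule_sum n (W0 ⊓ W.1)]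
    apply Finset.sum_congr rfl
    intro v _
    by_cases h1 : v ∈ W0 <;> by_cases h2 : v ∈ W.1 <;>
      simp [h1, h2, Submodule.mem_inf]
  rw [Finset.sum_congr rfl (fun W _ => h1 W), Finset.sum_comm]
  have h2 : ∀ v : Fin n → ZMod 2,
      (∑ W : Grassmannian n k, if v ∈ W0 ∧ v ∈ W.1 then (1:ℝ) else 0)
      = if v ∈ W0 then (if v = 0 then (grCard n k : ℝ) else (hvalAux n k : ℝ)) else 0 := by
    intro v
    by_cases hv0 : v ∈ W0
    · rw [if_pos hv0]
      have hW : ∀ W : Grassmannian n k,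
          (if v ∈ W0 ∧ v ∈ W.1 then (1:ℝ) else 0) = if v ∈ W.1 then 1 else 0 := by
        intro W
        by_cases hm : v ∈ W.1 <;> simp [hm, hv0]
      rw [Finset.sum_congr rfl (fun W _ => hW W), sum_ite_mem_gr]
      by_cases h0 : v = 0
      · rw [if_pos h0, h0, subCard_zero_vec]
      · rw [if_neg h0, subCard' h0]
    · rw [if_neg hv0]
      apply Finset.sum_eq_zero
      intro W _
      simp [hv0]
  rw [Finset.sum_congr rfl (fun v _ => h2 v)]
  rw [Finset.sum_ite, Finset.sum_const_zero, add_zero]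
  have h0mem : (0 : Fin n → ZMod 2) ∈ Finset.univ.filter (fun v => v ∈ W0) := by
    simp [W0.zero_mem]
  rw [← Finset.add_sum_erase _ _ h0mem, if_pos rfl]
  have h3 : ∀ v ∈ ((Finset.univ.filter (fun v : Fin n → ZMod 2 => v ∈ W0)).erase 0),
      (if v = 0 then (grCard n k : ℝ) else (hvalAux n k : ℝ)) = (hvalAux n k : ℝ) := by
    intro v hv
    rw [if_neg (Finset.ne_of_mem_erase hv)]
  rw [Finset.sum_congr rfl h3, Finset.sum_const, Finset.card_erase_of_mem h0mem]
  have hc : (Finset.univ.filter (fun v : Fin n → ZMod 2 => v ∈ W0)).card = 2^k := by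
    rw [← Fintype.card_subtype, ← Nat.card_eq_fintype_card, card_submodule W0 hW0]
  rw [hc, nsmul_eq_mul]
  push_cast [Nat.one_le_two_pow]
  ring

lemma grCard_succ_real {n k : ℕ} (h : k + 1 ≤ n) :
    (grCard n (k+1) : ℝ) = (2^n - 1) / (2^(k+1) - 1) * (grCard (n-1) k : ℝ) := by
  have hd : (2:ℝ)^(k+1) - 1 ≠ 0 := by
    have : (1:ℝ) < 2^(k+1) := one_lt_pow₀ (by norm_num) (by omega)
    linarith
  rw [div_mul_eq_mul_div, eq_div_iff hd]
  linear_combination gr_double n k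

lemma grCard_eq : ∀ {n k : ℕ}, k ≤ n → (grCard n k : ℝ) = gbinomR n k := by
  intro n k
  induction k generalizing n with
  | zero =>
    intro _
    rw [grCard_zero, gb_zero]
    norm_num
  | succ k ih =>
    intro h
    rw [grCard_succ_real h, ih (by omega : k ≤ n - 1)]
    have h2 := gb_succ (n-1) k
    rw [show n - 1 + 1 = n by omega] at h2
    rw [← h2]

lemma grCard_pos {n k : ℕ} (hkn : k ≤ n) : 0 < grCard n k := by
  have h := grCard_eq hkn
  have hgb := gb_pos hkn
  by_contra h0
  push_neg at h0
  have hz : grCard n k = 0 := by omega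
  rw [hz] at h
  simp at h
  linarith

-- basics
lemma euclid_sum_apply {ι κ : Type*} (s : Finset κ) (f : κ → EuclideanSpace ℂ ι) (i : ι) :
    (∑ j ∈ s, f j) i = ∑ j ∈ s, f j i := by
  induction s using Finset.cons_induction with
  | empty => rfl
  | cons a s ha ih =>
    rw [Finset.sum_cons, Finset.sum_cons, ← ih]
    rfl

noncomputable def cKAux (k : ℕ) : ℂ := ((((Real.sqrt 2 : ℝ) : ℂ)) ^ k)⁻¹

lemma cK_ne_zero (k : ℕ) : cKAux k ≠ 0 := by
  unfold cKAux
  apply inv_ne_zero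
  apply pow_ne_zero
  simp only [ne_eq, Complex.ofReal_eq_zero]
  positivity

lemma cK_conj (k : ℕ) : (starRingEnd ℂ) (cKAux k) = cKAux k := by
  unfold cKAux
  rw [map_inv₀, map_pow, Complex.conj_ofReal]

lemma cK_sq (k : ℕ) : cKAux k * cKAux k = ((((2:ℝ)^k)⁻¹ : ℝ) : ℂ) := by
  unfold cKAux
  rw [← mul_inv, ← pow_add]
  have h : ((Real.sqrt 2 : ℝ) : ℂ) ^ (k + k) = (((2:ℝ)^k : ℝ) : ℂ) := by
    rw [← Complex.ofReal_pow]
    congr 1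
    rw [pow_add, ← mul_pow, Real.mul_self_sqrt (by norm_num : (0:ℝ) ≤ 2)]
  rw [h, ← Complex.ofReal_inv]

lemma subspaceState_apply {n : ℕ} (W : Submodule (ZMod 2) (Fin n → ZMod 2)) (v : Fin n → ZMod 2) :
    subspaceState W v
      = cKAux (Module.finrank (ZMod 2) W) * (if v ∈ W then 1 else 0) := by
  unfold subspaceState cKAux
  rw [PiLp.smul_apply, euclid_sum_apply]
  rw [smul_eq_mul]
  congr 1
  have h1 : ∀ u : W, EuclideanSpace.single (u : Fin n → ZMod 2) (1:ℂ) v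
      = if v = (u : Fin n → ZMod 2) then 1 else 0 := by
    intro u
    rw [EuclideanSpace.single_apply]
  rw [Finset.sum_congr rfl (fun u _ => h1 u)]
  by_cases h : v ∈ W
  · rw [if_pos h, Finset.sum_eq_single (⟨v, h⟩ : W)]
    · simp
    · intro u _ hu
      rw [if_neg]
      intro he
      exact hu (Subtype.ext he.symm)
    · intro habs
      exact absurd (Finset.mem_univ _) habs
  · rw [if_neg h]
    apply Finset.sum_eq_zero
    intro u _
    rw [if_neg]
    intro he
    rw [he] at h
    exact h u.2

noncomputable def matA (n k : ℕ) (u v : Fin n → ZMod 2) : ℝ :=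
  ∑ W : Grassmannian n k, if u ∈ W.1 ∧ v ∈ W.1 then ((2:ℝ)^k)⁻¹ else 0

noncomputable def phiA (n k : ℕ) (v : Fin n → ZMod 2) : ℝ :=
  ∑ W : Grassmannian n k, if v ∈ W.1 then (1:ℝ) else 0

noncomputable def lamAux (n k : ℕ) : ℝ :=
  ((2:ℝ)^k)⁻¹ * ((grCard n k : ℝ) + ((2:ℝ)^k - 1) * (hvalAux n k : ℝ))

variable {n k : ℕ}

lemma matA_nonneg (u v : Fin n → ZMod 2) : 0 ≤ matA n k u v := by
  apply Finset.sum_nonneg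
  intro W _
  split <;> positivity

lemma matA_symm (u v : Fin n → ZMod 2) : matA n k u v = matA n k v u := by
  apply Finset.sum_congr rfl
  intro W _
  by_cases h1 : u ∈ W.1 <;> by_cases h2 : v ∈ W.1 <;> simp [h1, h2]

lemma phiA_nonneg (v : Fin n → ZMod 2) : 0 ≤ phiA n k v := by
  apply Finset.sum_nonneg
  intro W _
  split <;> norm_num

lemma phiA_pos_of_mem {v : Fin n → ZMod 2} (W : Grassmannian n k) (hv : v ∈ W.1) :
    0 < phiA n k v := by
  have h1 : (1:ℝ) ≤ phiA n k v := by
    have h0 := Finset.single_le_sum (f := fun W : Grassmannian n k =>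
      if v ∈ W.1 then (1:ℝ) else 0)
      (fun i _ => by by_cases h : v ∈ i.1 <;> simp [h]) (Finset.mem_univ W)
    unfold phiA
    simpa [hv] using h0
  linarith

lemma inner_subspaceState (W : Grassmannian n k) (x : EuclideanSpace ℂ (Fin n → ZMod 2)) :
    (inner ℂ (subspaceState W.1) x : ℂ)
      = cKAux k * ∑ v : Fin n → ZMod 2, (if v ∈ W.1 then (1:ℂ) else 0) * x v := by
  rw [PiLp.inner_apply, Finset.mul_sum]
  apply Finset.sum_congr rfl
  intro v _
  rw [RCLike.inner_apply, subspaceState_apply, W.2, map_mul, cK_conj]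
  have hc : (starRingEnd ℂ) (if v ∈ W.1 then (1:ℂ) else 0)
      = (if v ∈ W.1 then (1:ℂ) else 0) := by
    split <;> simp
  rw [hc]
  ring

lemma matA_cast (u v : Fin n → ZMod 2) :
    ((matA n k u v : ℝ) : ℂ) = ∑ W : Grassmannian n k,
      (cKAux k * cKAux k) * ((if u ∈ W.1 then (1:ℂ) else 0) * (if v ∈ W.1 then (1:ℂ) else 0)) := by
  unfold matA
  push_cast
  apply Finset.sum_congr rfl
  intro W _
  rw [cK_sq]
  by_cases h1 : u ∈ W.1 <;> by_cases h2 : v ∈ W.1 <;> simp [h1, h2]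

lemma opA_apply (x : EuclideanSpace ℂ (Fin n → ZMod 2)) (u : Fin n → ZMod 2) :
    ((∑ W : Grassmannian n k, outer (subspaceState W.1) (subspaceState W.1)) x) u
      = ∑ v : Fin n → ZMod 2, (matA n k u v : ℂ) * x v := by
  rw [ContinuousLinearMap.sum_apply, euclid_sum_apply]
  have hW : ∀ W : Grassmannian n k,
      (outer (subspaceState W.1) (subspaceState W.1) x) u
        = ∑ v : Fin n → ZMod 2, (cKAux k * cKAux k) *
            ((if u ∈ W.1 then (1:ℂ) else 0) * (if v ∈ W.1 then (1:ℂ) else 0)) * x v := by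
    intro W
    show ((innerSL ℂ (subspaceState W.1)).smulRight (subspaceState W.1) x) u = _
    rw [ContinuousLinearMap.smulRight_apply, PiLp.smul_apply, innerSL_apply_apply,
      inner_subspaceState, smul_eq_mul, subspaceState_apply, W.2]
    rw [Finset.mul_sum, Finset.sum_mul]
    apply Finset.sum_congr rfl
    intro v _
    ring
  rw [Finset.sum_congr rfl (fun W _ => hW W), Finset.sum_comm]
  apply Finset.sum_congr rfl
  intro v _
  rw [matA_cast, Finset.sum_mul]

lemma sum_chi_mul_chi (W W' : Grassmannian n k) :
    ∑ v : Fin n → ZMod 2, (if v ∈ W.1 then (1:ℝ) else 0) * (if v ∈ W'.1 then (1:ℝ) else 0)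
      = (Nat.card ↥(W.1 ⊓ W'.1) : ℝ) := by
  rw [← card_submodule_sum n (W.1 ⊓ W'.1)]
  apply Finset.sum_congr rfl
  intro v _
  by_cases h1 : v ∈ W.1 <;> by_cases h2 : v ∈ W'.1 <;>
    simp [h1, h2, Submodule.mem_inf]

lemma sum_chi_phi (W : Grassmannian n k) :
    ∑ v : Fin n → ZMod 2, (if v ∈ W.1 then (1:ℝ) else 0) * phiA n k v
      = (grCard n k : ℝ) + ((2:ℝ)^k - 1) * (hvalAux n k : ℝ) := by
  unfold phiA
  calc ∑ v : Fin n → ZMod 2, (if v ∈ W.1 then (1:ℝ) else 0) *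
        ∑ W' : Grassmannian n k, (if v ∈ W'.1 then (1:ℝ) else 0)
      = ∑ v : Fin n → ZMod 2, ∑ W' : Grassmannian n k,
          (if v ∈ W.1 then (1:ℝ) else 0) * (if v ∈ W'.1 then (1:ℝ) else 0) := by
        apply Finset.sum_congr rfl
        intro v _
        rw [Finset.mul_sum]
    _ = ∑ W' : Grassmannian n k, ∑ v : Fin n → ZMod 2,
          (if v ∈ W.1 then (1:ℝ) else 0) * (if v ∈ W'.1 then (1:ℝ) else 0) :=
        Finset.sum_comm
    _ = ∑ W' : Grassmannian n k, (Nat.card ↥(W.1 ⊓ W'.1) : ℝ) :=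
        Finset.sum_congr rfl (fun W' _ => sum_chi_mul_chi W W')
    _ = (grCard n k : ℝ) + ((2:ℝ)^k - 1) * (hvalAux n k : ℝ) :=
        inter_card_sum n k W.1 W.2

lemma matA_mulvec (u : Fin n → ZMod 2) :
    ∑ v : Fin n → ZMod 2, matA n k u v * phiA n k v = lamAux n k * phiA n k u := by
  have hsplit : ∀ u v : Fin n → ZMod 2, matA n k u v
      = ∑ W : Grassmannian n k, ((2:ℝ)^k)⁻¹ *
          ((if u ∈ W.1 then (1:ℝ) else 0) * (if v ∈ W.1 then (1:ℝ) else 0)) := by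
    intro u v
    apply Finset.sum_congr rfl
    intro W _
    by_cases h1 : u ∈ W.1 <;> by_cases h2 : v ∈ W.1 <;> simp [h1, h2]
  calc ∑ v : Fin n → ZMod 2, matA n k u v * phiA n k v
      = ∑ v : Fin n → ZMod 2, ∑ W : Grassmannian n k, ((2:ℝ)^k)⁻¹ *
          ((if u ∈ W.1 then (1:ℝ) else 0) * ((if v ∈ W.1 then (1:ℝ) else 0) * phiA n k v)) := by
        apply Finset.sum_congr rfl
        intro v _
        rw [hsplit u v, Finset.sum_mul]
        apply Finset.sum_congr rfl
        intro W _
        ring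
    _ = ∑ W : Grassmannian n k, ((2:ℝ)^k)⁻¹ * ((if u ∈ W.1 then (1:ℝ) else 0) *
          ∑ v : Fin n → ZMod 2, (if v ∈ W.1 then (1:ℝ) else 0) * phiA n k v) := by
        rw [Finset.sum_comm]
        apply Finset.sum_congr rfl
        intro W _
        rw [Finset.mul_sum, Finset.mul_sum]
    _ = ∑ W : Grassmannian n k, ((2:ℝ)^k)⁻¹ * ((if u ∈ W.1 then (1:ℝ) else 0) *
          ((grCard n k : ℝ) + ((2:ℝ)^k - 1) * (hvalAux n k : ℝ))) := by
        apply Finset.sum_congr rfl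
        intro W _
        rw [sum_chi_phi W]
    _ = lamAux n k * phiA n k u := by
        unfold lamAux phiA
        rw [Finset.mul_sum]
        apply Finset.sum_congr rfl
        intro W _
        ring

lemma perron {ι : Type*} [Fintype ι] (b : ι → ι → ℝ) (φ : ι → ℝ) (μ : ℝ)
    (hb : ∀ v w, 0 ≤ b v w) (hsym : ∀ v w, b v w = b w v)
    (hφ : ∀ v, 0 ≤ φ v) (hμ : 0 ≤ μ)
    (heig : ∀ v, ∑ w, b v w * φ w = μ * φ v)
    (hsupp : ∀ v w, b v w ≠ 0 → 0 < φ v)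
    (y : ι → ℝ) (hy : ∀ v, 0 ≤ y v) :
    ∑ v, ∑ w, b v w * (y v * y w) ≤ μ * ∑ v, y v ^ 2 := by
  have step1 : ∀ v w, b v w * (y v * y w) ≤
      (b v w * (y v^2 * φ w / φ v) + b v w * (y w^2 * φ v / φ w)) / 2 := by
    intro v w
    by_cases hbvw : b v w = 0
    · simp [hbvw]
    · have hv : 0 < φ v := hsupp v w hbvw
      have hw : 0 < φ w := hsupp w v (fun h => hbvw (by rw [hsym]; exact h))
      have key : y v * y w ≤ (y v^2 * φ w / φ v + y w^2 * φ v / φ w) / 2 := by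
        rw [le_div_iff₀ (by norm_num : (0:ℝ) < 2)]
        have h1 : y v^2 * φ w / φ v + y w^2 * φ v / φ w
            = (y v^2 * φ w^2 + y w^2 * φ v^2) / (φ v * φ w) := by
          field_simp
        rw [h1, le_div_iff₀ (mul_pos hv hw)]
        nlinarith [sq_nonneg (y v * φ w - y w * φ v)]
      calc b v w * (y v * y w)
          ≤ b v w * ((y v^2 * φ w / φ v + y w^2 * φ v / φ w) / 2) :=
            mul_le_mul_of_nonneg_left key (hb v w)
        _ = (b v w * (y v^2 * φ w / φ v) + b v w * (y w^2 * φ v / φ w)) / 2 := by ring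
  have step2 : ∑ v, ∑ w, b v w * (y v * y w)
      ≤ ∑ v, ∑ w, (b v w * (y v^2 * φ w / φ v) + b v w * (y w^2 * φ v / φ w)) / 2 :=
    Finset.sum_le_sum (fun v _ => Finset.sum_le_sum (fun w _ => step1 v w))
  have hsw : ∑ v, ∑ w, b v w * (y w^2 * φ v / φ w)
      = ∑ v, ∑ w, b v w * (y v^2 * φ w / φ v) := by
    rw [Finset.sum_comm]
    apply Finset.sum_congr rfl
    intro v _
    apply Finset.sum_congr rfl
    intro w _
    rw [hsym v w]
  have step3 : ∑ v, ∑ w, (b v w * (y v^2 * φ w / φ v) + b v w * (y w^2 * φ v / φ w)) / 2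
      = ∑ v, ∑ w, b v w * (y v^2 * φ w / φ v) := by
    have h1 : ∀ v : ι, ∑ w, (b v w * (y v^2 * φ w / φ v) + b v w * (y w^2 * φ v / φ w)) / 2
        = ((∑ w, b v w * (y v^2 * φ w / φ v)) + (∑ w, b v w * (y w^2 * φ v / φ w))) / 2 := by
      intro v
      rw [← Finset.sum_add_distrib, ← Finset.sum_div]
    rw [Finset.sum_congr rfl (fun v _ => h1 v), ← Finset.sum_div,
      Finset.sum_add_distrib, hsw]
    ring
  have step4 : ∑ v, ∑ w, b v w * (y v^2 * φ w / φ v) ≤ ∑ v, μ * y v^2 := by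
    apply Finset.sum_le_sum
    intro v _
    by_cases hv : 0 < φ v
    · have h1 : ∑ w, b v w * (y v^2 * φ w / φ v) = (y v^2 / φ v) * ∑ w, b v w * φ w := by
        rw [Finset.mul_sum]
        apply Finset.sum_congr rfl
        intro w _
        field_simp
      rw [h1, heig v]
      have h2 : y v^2 / φ v * (μ * φ v) = μ * y v^2 := by
        field_simp
      rw [h2]
    · push_neg at hv
      have hv0 : φ v = 0 := le_antisymm hv (hφ v)
      have hz : ∀ w, b v w * (y v^2 * φ w / φ v) = 0 := by
        intro w
        by_cases hb0 : b v w = 0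
        · rw [hb0, zero_mul]
        · exact absurd (hsupp v w hb0) (by rw [hv0]; norm_num)
      rw [Finset.sum_eq_zero (fun w _ => hz w)]
      positivity
  calc ∑ v, ∑ w, b v w * (y v * y w)
      ≤ ∑ v, ∑ w, b v w * (y v^2 * φ w / φ v) := step2.trans (le_of_eq step3)
    _ ≤ ∑ v, μ * y v^2 := step4
    _ = μ * ∑ v, y v^2 := (Finset.mul_sum _ _ _).symm

lemma lamAux_nonneg : 0 ≤ lamAux n k := by
  unfold lamAux
  have h1 : (1:ℝ) ≤ 2^k := one_le_pow₀ (by norm_num)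
  have h2 : (0:ℝ) ≤ (grCard n k : ℝ) := Nat.cast_nonneg _
  have h3 : (0:ℝ) ≤ (hvalAux n k : ℝ) := Nat.cast_nonneg _
  have h4 : (0:ℝ) ≤ ((2:ℝ)^k)⁻¹ := by positivity
  exact mul_nonneg h4 (add_nonneg h2 (mul_nonneg (by linarith) h3))

lemma norm_sq_euclid (x : EuclideanSpace ℂ (Fin n → ZMod 2)) :
    ‖x‖^2 = ∑ v : Fin n → ZMod 2, ‖x v‖^2 := by
  rw [EuclideanSpace.norm_eq, Real.sq_sqrt]
  positivity

lemma opA_norm_le (x : EuclideanSpace ℂ (Fin n → ZMod 2)) :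
    ‖(∑ W : Grassmannian n k, outer (subspaceState W.1) (subspaceState W.1)) x‖
      ≤ lamAux n k * ‖x‖ := by
  set A := ∑ W : Grassmannian n k, outer (subspaceState W.1) (subspaceState W.1) with hA
  set y : (Fin n → ZMod 2) → ℝ := fun v => ‖x v‖ with hy
  have hsq : ‖A x‖^2 ≤ (lamAux n k)^2 * ‖x‖^2 := by
    rw [norm_sq_euclid, norm_sq_euclid]
    have h2 : ∀ u, ‖(A x) u‖ ≤ ∑ v, matA n k u v * y v := by
      intro u
      rw [hA, opA_apply]
      refine le_trans (norm_sum_le _ _) ?_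
      apply Finset.sum_le_sum
      intro v _
      rw [norm_mul]
      have hnc : ‖((matA n k u v : ℝ) : ℂ)‖ = matA n k u v := by
        rw [Complex.norm_real, Real.norm_eq_abs, abs_of_nonneg (matA_nonneg u v)]
      rw [hnc]
    have h3 : ∑ u, ‖(A x) u‖^2 ≤ ∑ u, (∑ v, matA n k u v * y v)^2 := by
      apply Finset.sum_le_sum
      intro u _
      have := h2 u
      nlinarith [norm_nonneg ((A x) u), this]
    refine le_trans h3 ?_
    have h4 : ∑ u, (∑ v, matA n k u v * y v)^2
        = ∑ v, ∑ w, (∑ u, matA n k u v * matA n k u w) * (y v * y w) := by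
      have hu : ∀ u : Fin n → ZMod 2, (∑ v, matA n k u v * y v)^2
          = ∑ v, ∑ w, (matA n k u v * y v) * (matA n k u w * y w) := by
        intro u
        rw [sq, Finset.sum_mul_sum]
      rw [Finset.sum_congr rfl (fun u _ => hu u), Finset.sum_comm]
      apply Finset.sum_congr rfl
      intro v _
      rw [Finset.sum_comm]
      apply Finset.sum_congr rfl
      intro w _
      rw [Finset.sum_mul]
      apply Finset.sum_congr rfl
      intro u _
      ring
    rw [h4]
    have hbeig : ∀ v, ∑ w, (∑ u, matA n k u v * matA n k u w) * phiA n k w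
        = (lamAux n k)^2 * phiA n k v := by
      intro v
      have h1 : ∑ w, (∑ u, matA n k u v * matA n k u w) * phiA n k w
          = ∑ u, matA n k u v * (∑ w, matA n k u w * phiA n k w) := by
        have hw : ∀ w : Fin n → ZMod 2, (∑ u, matA n k u v * matA n k u w) * phiA n k w
            = ∑ u, matA n k u v * (matA n k u w * phiA n k w) := by
          intro w
          rw [Finset.sum_mul]
          apply Finset.sum_congr rfl
          intro u _
          ring
        rw [Finset.sum_congr rfl (fun w _ => hw w), Finset.sum_comm]
        apply Finset.sum_congr rfl
        intro u _
        rw [Finset.mul_sum]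
      rw [h1]
      have h2 : ∀ u, matA n k u v * (∑ w, matA n k u w * phiA n k w)
          = lamAux n k * (matA n k v u * phiA n k u) := by
        intro u
        rw [matA_mulvec u, matA_symm u v]
        ring
      rw [Finset.sum_congr rfl (fun u _ => h2 u), ← Finset.mul_sum, matA_mulvec v]
      ring
    have hbsupp : ∀ v w, (∑ u, matA n k u v * matA n k u w) ≠ 0 → 0 < phiA n k v := by
      intro v w hne
      obtain ⟨u, _, hu⟩ := Finset.exists_ne_zero_of_sum_ne_zero hne
      have hav : matA n k u v ≠ 0 := by
        intro h0
        exact hu (by rw [h0, zero_mul])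
      obtain ⟨W, _, hW⟩ := Finset.exists_ne_zero_of_sum_ne_zero hav
      have hvW : v ∈ W.1 := by
        by_contra hmem
        exact hW (if_neg (fun hc => hmem hc.2))
      exact phiA_pos_of_mem W hvW
    have hperron := perron (fun v w => ∑ u, matA n k u v * matA n k u w) (phiA n k)
      ((lamAux n k)^2)
      (fun v w => Finset.sum_nonneg (fun u _ => mul_nonneg (matA_nonneg u v) (matA_nonneg u w)))
      (fun v w => Finset.sum_congr rfl (fun u _ => mul_comm _ _))
      (fun v => phiA_nonneg v) (by positivity) hbeig hbsupp y (fun v => norm_nonneg _)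
    calc ∑ v, ∑ w, (∑ u, matA n k u v * matA n k u w) * (y v * y w)
        ≤ (lamAux n k)^2 * ∑ v, y v ^ 2 := hperron
      _ = (lamAux n k)^2 * ∑ v, ‖x v‖^2 := rfl
  nlinarith [norm_nonneg (A x), norm_nonneg x, lamAux_nonneg (n := n) (k := k), hsq,
    mul_nonneg (lamAux_nonneg (n := n) (k := k)) (norm_nonneg x)]

lemma phiA_cast (v : Fin n → ZMod 2) :
    ((phiA n k v : ℝ) : ℂ) = ∑ W : Grassmannian n k, (if v ∈ W.1 then (1:ℂ) else 0) := by
  unfold phiA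
  push_cast
  apply Finset.sum_congr rfl
  intro W _
  split <;> simp

lemma psi_apply (v : Fin n → ZMod 2) :
    (∑ W : Grassmannian n k, subspaceState W.1) v = cKAux k * ((phiA n k v : ℝ) : ℂ) := by
  rw [euclid_sum_apply, phiA_cast, Finset.mul_sum]
  apply Finset.sum_congr rfl
  intro W _
  rw [subspaceState_apply, W.2]

lemma phiA_zero_vec : phiA n k 0 = (grCard n k : ℝ) := by
  unfold phiA
  have h : ∀ W : Grassmannian n k,
      (if (0 : Fin n → ZMod 2) ∈ W.1 then (1:ℝ) else 0) = 1 :=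
    fun W => if_pos W.1.zero_mem
  rw [Finset.sum_congr rfl (fun W _ => h W), Finset.sum_const, Finset.card_univ,
    nsmul_eq_mul, mul_one, ← Nat.card_eq_fintype_card]
  rfl

lemma psi_ne_zero (hkn : k ≤ n) :
    (∑ W : Grassmannian n k, subspaceState W.1) ≠ 0 := by
  intro h
  have h0 : (∑ W : Grassmannian n k, subspaceState W.1) (0 : Fin n → ZMod 2) = 0 := by
    rw [h]; rfl
  rw [psi_apply, phiA_zero_vec] at h0
  rcases mul_eq_zero.mp h0 with hc | hc
  · exact cK_ne_zero k hc
  · rw [Complex.ofReal_eq_zero] at hc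
    have := grCard_pos (n := n) (k := k) hkn
    rw [Nat.cast_eq_zero] at hc
    omega

lemma opA_eigen :
    (∑ W : Grassmannian n k, outer (subspaceState W.1) (subspaceState W.1))
        (∑ W : Grassmannian n k, subspaceState W.1)
      = ((lamAux n k : ℝ) : ℂ) • ∑ W : Grassmannian n k, subspaceState W.1 := by
  apply PiLp.ext
  intro u
  have hl : ((∑ W : Grassmannian n k, outer (subspaceState W.1) (subspaceState W.1))
      (∑ W : Grassmannian n k, subspaceState W.1)) u
      = ∑ v : Fin n → ZMod 2, (matA n k u v : ℂ) *
          (cKAux k * ((phiA n k v : ℝ) : ℂ)) := by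
    rw [opA_apply]
    apply Finset.sum_congr rfl
    intro v _
    rw [psi_apply]
  have hr : ((((lamAux n k : ℝ) : ℂ) • ∑ W : Grassmannian n k, subspaceState W.1) : EuclideanSpace ℂ (Fin n → ZMod 2)) u
      = ((lamAux n k : ℝ) : ℂ) * (cKAux k * ((phiA n k u : ℝ) : ℂ)) := by
    rw [PiLp.smul_apply, psi_apply, smul_eq_mul]
  rw [hl, hr]
  have hterm : ∀ v, (matA n k u v : ℂ) * (cKAux k * ((phiA n k v : ℝ) : ℂ))
      = cKAux k * (((matA n k u v * phiA n k v : ℝ) : ℂ)) := by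
    intro v
    push_cast
    ring
  rw [Finset.sum_congr rfl (fun v _ => hterm v), ← Finset.mul_sum, ← Complex.ofReal_sum,
    matA_mulvec u]
  push_cast
  ring

lemma opA_norm (hkn : k ≤ n) :
    ‖∑ W : Grassmannian n k, outer (subspaceState W.1) (subspaceState W.1)‖
      = lamAux n k := by
  apply le_antisymm
  · exact ContinuousLinearMap.opNorm_le_bound _ lamAux_nonneg opA_norm_le
  · set A := ∑ W : Grassmannian n k, outer (subspaceState W.1) (subspaceState W.1) with hA
    set ψ := ∑ W : Grassmannian n k, subspaceState W.1 with hψdef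
    have hψ : ψ ≠ 0 := psi_ne_zero hkn
    have h1 : ‖A ψ‖ = lamAux n k * ‖ψ‖ := by
      rw [hA, hψdef, opA_eigen, norm_smul, Complex.norm_real, Real.norm_eq_abs,
        abs_of_nonneg lamAux_nonneg]
    have h2 := A.le_opNorm ψ
    rw [h1] at h2
    have h3 : 0 < ‖ψ‖ := norm_pos_iff.mpr hψ
    exact le_of_mul_le_mul_right h2 h3

lemma lam_eq {n k : ℕ} (hkn : k ≤ n) : lamAux n k = fsumAux (n-k) k := by
  cases k with
  | zero =>
    rw [fsum_zero]
    unfold lamAux hvalAux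
    rw [if_pos rfl, grCard_zero]
    norm_num
  | succ j =>
    rw [fsum_succ, show n - (j+1) + j = n - 1 by omega]
    unfold lamAux hvalAux
    rw [if_neg (Nat.succ_ne_zero j)]
    simp only [Nat.add_sub_cancel]
    rw [grCard_eq hkn, grCard_eq (show j ≤ n - 1 by omega)]
    have hp := gb_pascal2 (n-1) j
    rw [show n - 1 + 1 = n by omega] at hp
    have h2 : ((2:ℝ)^(j+1)) ≠ 0 := by positivity
    field_simp
    linear_combination hp

/-- For `0 ≤ k ≤ n` and `N = [n choose k]₂`,
`‖(1/N) ∑_W |W⟩⟨W|‖ = (1/N) ∑_{m=0}^k 2^{m²}·[n-k choose m]₂·[k choose m]₂·2^{-m}`; moreover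
the nonzero vector `∑_W |W⟩` is an eigenvector of `∑_W |W⟩⟨W|` attaining this norm, i.e. with
eigenvalue `∑_{m=0}^k 2^{m²}·[n-k choose m]₂·[k choose m]₂·2^{-m}`. -/
theorem norm_expectation_outer_subspaceState_eq {n k : ℕ} (hkn : k ≤ n) :
    ‖((gbinomR n k : ℝ) : ℂ)⁻¹ •
        ∑ W : Grassmannian n k,
          outer (subspaceState (W : Submodule (ZMod 2) (Fin n → ZMod 2)))
            (subspaceState (W : Submodule (ZMod 2) (Fin n → ZMod 2)))‖ =
      (gbinomR n k)⁻¹ *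
        ∑ m ∈ Finset.range (k + 1),
          2 ^ (m ^ 2) * gbinomR (n - k) m * gbinomR k m * (2 : ℝ) ^ (-(m : ℤ)) ∧
    (∑ W : Grassmannian n k,
        outer (subspaceState (W : Submodule (ZMod 2) (Fin n → ZMod 2)))
          (subspaceState (W : Submodule (ZMod 2) (Fin n → ZMod 2))))
        (∑ W : Grassmannian n k, subspaceState (W : Submodule (ZMod 2) (Fin n → ZMod 2))) =
      (((∑ m ∈ Finset.range (k + 1),
          2 ^ (m ^ 2) * gbinomR (n - k) m * gbinomR k m * (2 : ℝ) ^ (-(m : ℤ)) : ℝ)) : ℂ) •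
        ∑ W : Grassmannian n k, subspaceState (W : Submodule (ZMod 2) (Fin n → ZMod 2)) ∧
    (∑ W : Grassmannian n k, subspaceState (W : Submodule (ZMod 2) (Fin n → ZMod 2))) ≠ 0 := by
  have hfs : lamAux n k
      = ∑ m ∈ Finset.range (k + 1),
          2 ^ (m ^ 2) * gbinomR (n - k) m * gbinomR k m * (2 : ℝ) ^ (-(m : ℤ)) :=
    lam_eq hkn
  refine ⟨?_, ?_, psi_ne_zero hkn⟩
  · rw [← hfs]
    have h1 : ‖((gbinomR n k : ℝ) : ℂ)⁻¹ •
        ∑ W : Grassmannian n k,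
          outer (subspaceState (W : Submodule (ZMod 2) (Fin n → ZMod 2)))
            (subspaceState (W : Submodule (ZMod 2) (Fin n → ZMod 2)))‖
        = ‖((gbinomR n k : ℝ) : ℂ)⁻¹‖ *
          ‖∑ W : Grassmannian n k,
            outer (subspaceState (W : Submodule (ZMod 2) (Fin n → ZMod 2)))
              (subspaceState (W : Submodule (ZMod 2) (Fin n → ZMod 2)))‖ := norm_smul (α := ℂ)
        (β := EuclideanSpace ℂ (Fin n → ZMod 2) →L[ℂ] EuclideanSpace ℂ (Fin n → ZMod 2)) _ _
    rw [h1, opA_norm hkn]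
    have hnorm : ‖(((gbinomR n k : ℝ) : ℂ))⁻¹‖ = (gbinomR n k)⁻¹ := by
      rw [norm_inv, Complex.norm_real, Real.norm_eq_abs, abs_of_pos (gb_pos hkn)]
    rw [hnorm]
  · rw [← hfs]
    exact opA_eigen
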